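/- arXiv:1412.4307 — 2 statements merged into one kernel-verified Lean document; each statement's English description precedes it below -/
import Mathlib

section
/- Let G(x) = (1/2)e^{-|x|} and let α ∈ (0,1). Define for each positive integer N the weight J_N(x) = e^{αN} for x < -N, J_N(x) = e^{-αx} for -N ≤ x ≤ 0, and J_N(x) = 1 for x > 0. Then there exists a constant C₀ > 0, independent of N, such that J_N(x)·|(∂ₓG ∗ J_N^{-1})(x)| ≤ C₀ for all x ∈ ℝ. -/
open MeasureTheory Real

/-- The weight function `J_N`. -/
noncomputable def J (α : ℝ) (N : ℕ) (x : ℝ) : ℝ :=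
  if x < -(N : ℝ) then Real.exp (α * N)
  else if x ≤ 0 then Real.exp (-α * x)
  else 1

lemma J_eq (α : ℝ) (N : ℕ) (x : ℝ) :
    J α N x = Real.exp (α * min (N : ℝ) (max 0 (-x))) := by
  have hN : (0:ℝ) ≤ N := Nat.cast_nonneg N
  unfold J
  split_ifs with h1 h2
  · rw [max_eq_right (by linarith), min_eq_left (by linarith)]
  · rw [max_eq_right (by linarith), min_eq_right (by linarith)]
    ring_nf
  · rw [max_eq_left (by linarith), min_eq_right hN, mul_zero, Real.exp_zero]

lemma J_pos (α : ℝ) (N : ℕ) (x : ℝ) : 0 < J α N x := by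
  rw [J_eq]; exact Real.exp_pos _

lemma J_ratio (α : ℝ) (hα : 0 ≤ α) (N : ℕ) (x y : ℝ) :
    J α N x ≤ Real.exp (α * |x - y|) * J α N y := by
  rw [J_eq, J_eq, ← Real.exp_add, Real.exp_le_exp]
  have key : min (N : ℝ) (max 0 (-x)) ≤ |x - y| + min (N : ℝ) (max 0 (-y)) := by
    have h1 := le_abs_self (x - y)
    have h2 := neg_abs_le (x - y)
    have h3 := abs_nonneg (x - y)
    simp only [min_def, max_def]
    split_ifs <;> linarith
  have := mul_le_mul_of_nonneg_left key hα
  linarith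

lemma abs_sign_le_one (t : ℝ) : |Real.sign t| ≤ 1 := by
  rcases lt_trichotomy t 0 with h | h | h
  · rw [Real.sign_of_neg h]; norm_num
  · rw [h, Real.sign_zero]; norm_num
  · rw [Real.sign_of_pos h]; norm_num

lemma integrable_exp_neg_mul_abs (c x : ℝ) (hc : 0 < c) :
    Integrable (fun y : ℝ => Real.exp (-(c * |x - y|))) := by
  have base : Integrable (fun y : ℝ => Real.exp (-(c * |y|))) := by
    have hIci : IntegrableOn (fun y : ℝ => Real.exp (-(c * |y|))) (Set.Ici 0) := by
      rw [integrableOn_Ici_iff_integrableOn_Ioi]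
      exact (exp_neg_integrableOn_Ioi 0 hc).congr_fun
        (fun y hy => by rw [abs_of_pos (by exact hy)]; ring_nf) measurableSet_Ioi
    have hIic : IntegrableOn (fun y : ℝ => Real.exp (-(c * |y|))) (Set.Iic 0) := by
      have A : MeasurableEmbedding (fun x : ℝ => -x) :=
        (Homeomorph.neg ℝ).isClosedEmbedding.measurableEmbedding
      have h1 : IntegrableOn ((fun y : ℝ => Real.exp (-(c * |y|))) ∘ fun x : ℝ => -x)
          ((fun x : ℝ => -x) ⁻¹' Set.Iic 0) volume := by
        have heq : ((fun y : ℝ => Real.exp (-(c * |y|))) ∘ fun x : ℝ => -x)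
            = fun y : ℝ => Real.exp (-(c * |y|)) := by
          funext y; simp [abs_neg]
        rw [heq]
        have hpre : (fun x : ℝ => -x) ⁻¹' Set.Iic 0 = Set.Ici 0 := by
          ext t; simp
        rw [hpre]; exact hIci
      have h2 := (A.integrableOn_map_iff (f := fun y : ℝ => Real.exp (-(c * |y|)))
        (s := Set.Iic 0) (μ := volume)).mpr h1
      rwa [Measure.map_neg_eq_self (volume : Measure ℝ)] at h2
    rw [← integrableOn_univ, ← Set.Iic_union_Ici (a := (0:ℝ))]
    exact hIic.union hIci
  exact base.comp_sub_left x

lemma integral_exp_neg_mul_abs (c x : ℝ) (hc : 0 < c) :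
    ∫ y : ℝ, Real.exp (-(c * |x - y|)) = 2 / c := by
  have h1 : (∫ y : ℝ, Real.exp (-(c * |x - y|)))
      = ∫ y : ℝ, (fun z : ℝ => Real.exp (-(c * |z|))) (x - y) := rfl
  rw [h1, integral_sub_left_eq_self (fun z : ℝ => Real.exp (-(c * |z|))) volume x,
    integral_comp_abs (f := fun z : ℝ => Real.exp (-(c * z)))]
  have h2 := integral_comp_mul_left_Ioi (fun z : ℝ => Real.exp (-z)) 0 hc
  simp only [mul_zero, smul_eq_mul] at h2
  rw [h2, integral_exp_neg_Ioi_zero]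
  field_simp

/-- `J_N(x) |(∂ₓG ∗ J_N⁻¹)(x)| ≤ C₀` uniformly in `N` and `x`, where
`∂ₓG(x) = -(1/2) sgn(x) e^{-|x|}`. -/
theorem JN_weighted_conv_deriv_bound (α : ℝ) (hα : α ∈ Set.Ioo (0:ℝ) 1) :
    ∃ C₀ > (0:ℝ), ∀ N : ℕ, 0 < N → ∀ x : ℝ,
      J α N x * |∫ y : ℝ, (-(1/2)) * Real.sign (x - y) * Real.exp (-|x - y|) / J α N y| ≤ C₀ := by
  obtain ⟨hα0, hα1⟩ := hα
  have hc : (0:ℝ) < 1 - α := by linarith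
  refine ⟨1 / (1 - α), by positivity, fun N _ x => ?_⟩
  set f : ℝ → ℝ := fun y => (-(1/2)) * Real.sign (x - y) * Real.exp (-|x - y|) / J α N y with hf
  set g : ℝ → ℝ := fun y => (1/2) * Real.exp (-((1 - α) * |x - y|)) with hg
  have hgint : Integrable g := (integrable_exp_neg_mul_abs (1 - α) x hc).const_mul (1/2)
  have h0 : J α N x * |∫ y, f y| = |∫ y, J α N x * f y| := by
    rw [integral_const_mul, abs_mul, abs_of_pos (J_pos α N x)]
  have h1 : |∫ y, J α N x * f y| ≤ ∫ y, |J α N x * f y| := by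
    have := norm_integral_le_integral_norm (μ := volume) (fun y => J α N x * f y)
    simp only [Real.norm_eq_abs] at this; exact this
  have hpt : ∀ y : ℝ, |J α N x * f y| ≤ g y := by
    intro y
    have hJy := J_pos α N y
    have hJx := J_pos α N x
    have hd : (0:ℝ) ≤ |x - y| := abs_nonneg _
    have hE : (0:ℝ) < Real.exp (-|x - y|) := Real.exp_pos _
    have hs0 : (0:ℝ) ≤ |Real.sign (x - y)| := abs_nonneg _
    have hs1 := abs_sign_le_one (x - y)
    have hab := J_ratio α (le_of_lt hα0) N x y
    have habs : |J α N x * f y|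
        = J α N x * (1/2 * |Real.sign (x - y)| * Real.exp (-|x - y|)) / J α N y := by
      rw [hf]
      simp only [abs_mul, abs_div, abs_of_pos hJx, abs_of_pos hJy,
        abs_of_pos hE, abs_neg]
      rw [mul_div_assoc]
      norm_num
      ring
    rw [habs, hg]
    calc J α N x * (1/2 * |Real.sign (x - y)| * Real.exp (-|x - y|)) / J α N y
        ≤ J α N x * (1/2 * 1 * Real.exp (-|x - y|)) / J α N y := by gcongr
      _ ≤ (Real.exp (α * |x - y|) * J α N y) * (1/2 * 1 * Real.exp (-|x - y|)) / J α N y := by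
          gcongr
      _ = 1/2 * (Real.exp (α * |x - y|) * Real.exp (-|x - y|)) := by
          field_simp
      _ = 1/2 * Real.exp (-((1 - α) * |x - y|)) := by
          rw [← Real.exp_add]; ring_nf
  have h2 : (∫ y, |J α N x * f y|) ≤ ∫ y, g y :=
    integral_mono_of_nonneg (Filter.Eventually.of_forall fun y => abs_nonneg _) hgint
      (Filter.Eventually.of_forall hpt)
  have h3 : (∫ y, g y) = 1 / (1 - α) := by
    rw [hg, integral_const_mul, integral_exp_neg_mul_abs (1 - α) x hc]
    field_simp
  calc J α N x * |∫ y, f y| = |∫ y, J α N x * f y| := h0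
    _ ≤ ∫ y, |J α N x * f y| := h1
    _ ≤ ∫ y, g y := h2
    _ = 1 / (1 - α) := h3
end

section
/- Let G(x) = (1/2)e^{-|x|} and let α ∈ (0,1). Define for each positive integer N the weight φ_N(x) = 1 for x < 0, φ_N(x) = e^{αx} for 0 ≤ x ≤ N, and φ_N(x) = e^{αN} for x > N. Then there exists a constant C₀ > 0, independent of N, such that φ_N(x)·(G ∗ φ_N^{-1})(x) ≤ C₀ and φ_N(x)·|(∂ₓG ∗ φ_N^{-1})(x)| ≤ C₀ for all x ∈ ℝ. -/
open MeasureTheory Real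

/-- The weight function `φ_N`. -/
noncomputable def phi (α : ℝ) (N : ℕ) (x : ℝ) : ℝ :=
  if x < 0 then 1
  else if x ≤ (N : ℝ) then Real.exp (α * x)
  else Real.exp (α * N)

lemma phi_eq (α : ℝ) (N : ℕ) (x : ℝ) :
    phi α N x = Real.exp (α * min (max x 0) (N : ℝ)) := by
  unfold phi
  split_ifs with h1 h2
  · rw [max_eq_right h1.le, min_eq_left (Nat.cast_nonneg N), mul_zero, Real.exp_zero]
  · rw [max_eq_left (not_lt.mp h1), min_eq_left h2]
  · rw [max_eq_left (not_lt.mp h1), min_eq_right (not_le.mp h2).le]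

lemma clamp_nonneg (N : ℕ) (x : ℝ) : 0 ≤ min (max x 0) (N : ℝ) :=
  le_min (le_max_right x 0) (Nat.cast_nonneg N)

lemma one_le_phi {α : ℝ} (hα : 0 ≤ α) (N : ℕ) (x : ℝ) : 1 ≤ phi α N x := by
  rw [phi_eq]
  exact Real.one_le_exp (mul_nonneg hα (clamp_nonneg N x))

lemma phi_pos {α : ℝ} (hα : 0 ≤ α) (N : ℕ) (x : ℝ) : 0 < phi α N x :=
  lt_of_lt_of_le one_pos (one_le_phi hα N x)

lemma phi_ratio {α : ℝ} (hα : 0 ≤ α) (N : ℕ) (x y : ℝ) :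
    phi α N x ≤ Real.exp (α * |x - y|) * phi α N y := by
  rw [phi_eq, phi_eq, ← Real.exp_add, Real.exp_le_exp]
  have h1 : |min (max x 0) (N : ℝ) - min (max y 0) (N : ℝ)| ≤ |x - y| := by
    calc |min (max x 0) (N : ℝ) - min (max y 0) (N : ℝ)|
        ≤ max |max x 0 - max y 0| |(N : ℝ) - (N : ℝ)| := abs_min_sub_min_le_max _ _ _ _
      _ ≤ |x - y| := by
          rw [sub_self, abs_zero]
          exact max_le (abs_max_sub_max_le_abs x y 0) (abs_nonneg _)
  have h2 : min (max x 0) (N : ℝ) - min (max y 0) (N : ℝ) ≤ |x - y| :=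
    (le_abs_self _).trans h1
  nlinarith [mul_le_mul_of_nonneg_left h2 hα]

lemma integrable_exp_neg_abs {b : ℝ} (hb : 0 < b) :
    Integrable (fun y : ℝ => Real.exp (-(b * |y|))) := by
  have hIoi : IntegrableOn (fun y : ℝ => Real.exp (-(b * |y|))) (Set.Ioi 0) := by
    refine (exp_neg_integrableOn_Ioi 0 hb).congr_fun (fun y hy => ?_) measurableSet_Ioi
    rw [abs_of_pos hy, ← neg_mul]
  have hIic : IntegrableOn (fun y : ℝ => Real.exp (-(b * |y|))) (Set.Iic 0) := by
    rw [← Measure.map_neg_eq_self (volume : Measure ℝ)]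
    have m : MeasurableEmbedding fun x : ℝ => -x :=
      (Homeomorph.neg ℝ).measurableEmbedding
    rw [m.integrableOn_map_iff]
    simp_rw [Function.comp_def, abs_neg, Set.neg_preimage, Set.neg_Iic, neg_zero]
    exact Iff.mpr integrableOn_Ici_iff_integrableOn_Ioi hIoi
  have := hIic.union hIoi
  rwa [Set.Iic_union_Ioi, integrableOn_univ] at this

lemma integral_exp_neg_abs {b : ℝ} (hb : 0 < b) :
    (∫ y : ℝ, Real.exp (-(b * |y|))) = 2 / b := by
  rw [integral_comp_abs (f := fun y => Real.exp (-(b * y)))]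
  have : (∫ y : ℝ in Set.Ioi 0, Real.exp (-(b * y)))
      = b⁻¹ • ∫ y : ℝ in Set.Ioi (b * 0), Real.exp (-y) :=
    integral_comp_mul_left_Ioi (fun u => Real.exp (-u)) 0 hb
  rw [this, mul_zero, integral_exp_neg_Ioi, neg_zero, Real.exp_zero, smul_eq_mul]
  field_simp

lemma measurable_phi (α : ℝ) (N : ℕ) : Measurable (phi α N) := by
  have : phi α N = fun x => Real.exp (α * min (max x 0) (N : ℝ)) :=
    funext (phi_eq α N)
  rw [this]
  exact (Real.continuous_exp.comp
    (continuous_const.mul ((continuous_id.max continuous_const).min continuous_const))).measurable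

lemma measurable_real_sign : Measurable Real.sign := by
  unfold Real.sign
  exact Measurable.ite (measurableSet_Iio) measurable_const
    (Measurable.ite (measurableSet_lt measurable_const measurable_id)
      measurable_const measurable_const)

lemma abs_real_sign_le_one (r : ℝ) : |Real.sign r| ≤ 1 := by
  rcases Real.sign_apply_eq r with h | h | h <;> rw [h] <;> norm_num

/-- `φ_N(x)(G ∗ φ_N⁻¹)(x) ≤ C₀` and `φ_N(x)|(∂ₓG ∗ φ_N⁻¹)(x)| ≤ C₀` uniformly in `N` and `x`,
where `G(x) = (1/2)e^{-|x|}` and `∂ₓG(x) = -(1/2) sgn(x) e^{-|x|}`. -/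
theorem phiN_weighted_conv_bounds (α : ℝ) (hα : α ∈ Set.Ioo (0:ℝ) 1) :
    ∃ C₀ > (0:ℝ), ∀ N : ℕ, 0 < N → ∀ x : ℝ,
      phi α N x * (∫ y : ℝ, (1/2) * Real.exp (-|x - y|) / phi α N y) ≤ C₀ ∧
      phi α N x * |∫ y : ℝ, (-(1/2)) * Real.sign (x - y) * Real.exp (-|x - y|) / phi α N y| ≤ C₀ := by
  obtain ⟨hα0, hα1⟩ := hα
  have hb : (0:ℝ) < 1 - α := by linarith
  refine ⟨1 / (1 - α), by positivity, fun N _ x => ?_⟩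
  set f : ℝ → ℝ := fun y => (1/2) * Real.exp (-|x - y|) / phi α N y with hf
  set g : ℝ → ℝ := fun y => (1/2) * Real.exp (-((1 - α) * |x - y|)) with hg
  set h : ℝ → ℝ := fun y => (-(1/2)) * Real.sign (x - y) * Real.exp (-|x - y|) / phi α N y with hh
  -- integrability of g (and similarly for rate 1)
  have int_shift : ∀ b : ℝ, 0 < b → Integrable (fun y : ℝ => Real.exp (-(b * |x - y|))) := by
    intro b hbpos
    have := (integrable_exp_neg_abs hbpos).comp_sub_right (g := x)
    refine this.congr (Filter.Eventually.of_forall fun y => ?_)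
    simp only [abs_sub_comm y x]
  have hg_int : Integrable g := ((int_shift (1 - α) hb).const_mul (1/2))
  have hg1_int : Integrable (fun y : ℝ => (1/2) * Real.exp (-(1 * |x - y|))) :=
    (int_shift 1 one_pos).const_mul (1/2)
  have hphi_pos : ∀ y, 0 < phi α N y := phi_pos hα0.le N
  have hphi_one : ∀ y, 1 ≤ phi α N y := one_le_phi hα0.le N
  -- f is nonneg and dominated
  have hf_nonneg : ∀ y, 0 ≤ f y := fun y =>
    div_nonneg (by positivity) (hphi_pos y).le
  have hf_le : ∀ y, f y ≤ (1/2) * Real.exp (-(1 * |x - y|)) := by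
    intro y
    rw [one_mul]
    exact div_le_self (by positivity) (hphi_one y)
  have hf_meas : Measurable f := by
    exact ((measurable_const.mul
      ((measurable_const.sub measurable_id).abs.neg.exp)).div (measurable_phi α N))
  have hf_int : Integrable f := by
    refine hg1_int.mono hf_meas.aestronglyMeasurable (Filter.Eventually.of_forall fun y => ?_)
    rw [Real.norm_eq_abs, Real.norm_eq_abs, abs_of_nonneg (hf_nonneg y),
      abs_of_nonneg (by positivity)]
    exact hf_le y
  -- h is dominated by f in absolute value
  have hh_abs_le : ∀ y, |h y| ≤ f y := by
    intro y
    rw [hh, hf]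
    rw [abs_div, abs_of_pos (hphi_pos y)]
    apply div_le_div_of_nonneg_right ?_ (hphi_pos y).le |>.trans_eq rfl
    have hs := abs_real_sign_le_one (x - y)
    have hsn := abs_nonneg (Real.sign (x - y))
    have hep := Real.exp_pos (-|x - y|)
    rw [abs_mul, abs_mul, abs_of_pos hep, abs_neg, show |(1/2:ℝ)| = 1/2 by norm_num]
    nlinarith
  have hh_meas : Measurable h := by
    exact (((measurable_const.mul
      (measurable_real_sign.comp (measurable_const.sub measurable_id))).mul
      ((measurable_const.sub measurable_id).abs.neg.exp)).div (measurable_phi α N))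
  have hh_int : Integrable h := by
    refine hf_int.mono hh_meas.aestronglyMeasurable (Filter.Eventually.of_forall fun y => ?_)
    rw [Real.norm_eq_abs, Real.norm_eq_abs, abs_of_nonneg (hf_nonneg y)]
    exact hh_abs_le y
  -- the key pointwise bound
  have key : ∀ y, phi α N x * f y ≤ g y := by
    intro y
    have hpy := hphi_pos y
    have hxy : phi α N x / phi α N y ≤ Real.exp (α * |x - y|) :=
      (div_le_iff₀ hpy).mpr (phi_ratio hα0.le N x y)
    have e1 : phi α N x * f y
        = (phi α N x / phi α N y) * ((1/2) * Real.exp (-|x - y|)) := by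
      rw [hf]
      field_simp
    rw [e1, hg]
    calc (phi α N x / phi α N y) * ((1/2) * Real.exp (-|x - y|))
        ≤ Real.exp (α * |x - y|) * ((1/2) * Real.exp (-|x - y|)) :=
          mul_le_mul_of_nonneg_right hxy (by positivity)
      _ = (1/2) * Real.exp (-((1 - α) * |x - y|)) := by
          rw [mul_left_comm, ← Real.exp_add]
          congr 2
          ring
  -- integral of g
  have hg_val : (∫ y, g y) = 1 / (1 - α) := by
    have e2 : (∫ y, g y) = (1/2) * ∫ y, Real.exp (-((1 - α) * |x - y|)) := by
      rw [hg, integral_const_mul]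
    have e3 : (∫ y : ℝ, Real.exp (-((1 - α) * |x - y|)))
        = ∫ y : ℝ, Real.exp (-((1 - α) * |y|)) := by
      rw [← integral_sub_right_eq_self (fun y : ℝ => Real.exp (-((1 - α) * |y|))) x]
      exact integral_congr_ae (Filter.Eventually.of_forall fun y => by simp only [abs_sub_comm x y])
    rw [e2, e3, integral_exp_neg_abs hb]
    field_simp
  have main : phi α N x * (∫ y, f y) ≤ 1 / (1 - α) := by
    rw [← integral_const_mul]
    calc (∫ y, phi α N x * f y) ≤ ∫ y, g y :=
          integral_mono (hf_int.const_mul _) hg_int key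
      _ = 1 / (1 - α) := hg_val
  refine ⟨main, ?_⟩
  -- second bound
  have habs : |∫ y, h y| ≤ ∫ y, f y := by
    calc |∫ y, h y| ≤ ∫ y, |h y| := by
          simpa [Real.norm_eq_abs] using norm_integral_le_integral_norm h
      _ ≤ ∫ y, f y := integral_mono hh_int.abs hf_int hh_abs_le
  calc phi α N x * |∫ y, h y| ≤ phi α N x * ∫ y, f y :=
        mul_le_mul_of_nonneg_left habs (lt_of_lt_of_le one_pos (one_le_phi hα0.le N x)).le
    _ ≤ 1 / (1 - α) := main
end
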